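/- Let κ be a regular uncountable cardinal and λ ≥ κ a cardinal. Then I_IS[κ,λ] is a normal ideal on P_κλ: it contains every nonstationary subset of P_κλ, is closed under subsets and finite unions, and whenever D ⊆ P_κλ and g : D → λ is regressive (meaning g(a) ∈ a for every nonempty a ∈ D) with g⁻¹{γ} ∈ I_IS[κ,λ] for every γ < λ, then D ∈ I_IS[κ,λ]. -/

import Mathlib

open Cardinal Set

/-! Combinatorial framework: `P_κ λ`, clubs, stationarity, thin/slender lists,
branches, the principles `TP`, `SP`, `ITP`, `ISP`, the ideals `I_IT`, `I_IS`,
ultrafilter notions, ordinal clubs, and square sequences. -/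

/-- `P_κ λ`: the collection of subsets of (the set of ordinals below) `λ` of size `< κ`. -/
def Pk (κ lam : Cardinal.{0}) : Set (Set Ordinal.{0}) :=
  {a | (∀ α ∈ a, α < lam.ord) ∧ #a < Cardinal.lift.{1} κ}

/-- `C` is club in `P_κ X` (represented by `S`, a collection of subsets of `X`):
cofinal in `(S, ⊆)` and closed under unions of `⊆`-increasing chains of length `< κ`. -/
def IsClubIn {X : Type*} (κ : Cardinal.{0}) (S : Set (Set X)) (C : Set (Set X)) : Prop :=
  C ⊆ S ∧ (∀ a ∈ S, ∃ c ∈ C, a ⊆ c) ∧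
    ∀ δ : Ordinal.{0}, 0 < δ → δ.card < κ →
      ∀ f : Ordinal.{0} → Set X, (∀ β < δ, f β ∈ C) →
        (∀ β γ, β ≤ γ → γ < δ → f β ⊆ f γ) →
        (⋃ β ∈ Set.Iio δ, f β) ∈ C

/-- `T` is stationary in `P_κ X`: it meets every club. -/
def IsStatIn {X : Type*} (κ : Cardinal.{0}) (S T : Set (Set X)) : Prop :=
  T ⊆ S ∧ ∀ C, IsClubIn κ S C → (T ∩ C).Nonempty

/-- A `P_κ λ`-list: `d a ⊆ a` for every `a ∈ P_κ λ`. -/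
def IsList (κ lam : Cardinal) (d : Set Ordinal → Set Ordinal) : Prop :=
  ∀ a ∈ Pk κ lam, d a ⊆ a

/-- A thin `P_κ λ`-list: on a club of `c`'s, `|{d_a ∩ c : c ⊆ a ∈ P_κ λ}| < κ`. -/
def IsThin (κ lam : Cardinal) (d : Set Ordinal → Set Ordinal) : Prop :=
  ∃ C, IsClubIn κ (Pk κ lam) C ∧
    ∀ c ∈ C, #{x : Set Ordinal | ∃ a ∈ Pk κ lam, c ⊆ a ∧ x = d a ∩ c} < Cardinal.lift.{1} κ

/-- `H_θ`: sets hereditarily of cardinality `< θ`. -/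
def HSet (θ : Cardinal.{0}) : Set ZFSet.{0} :=
  {x | ZFSet.Hereditarily (fun y => #y.toSet < Cardinal.lift.{1} θ) x}

/-- `x` is the von Neumann ordinal corresponding to the ordinal `α`. -/
def IsOrdZF (x : ZFSet) (α : Ordinal) : Prop :=
  x.IsOrdinal ∧ x.rank = α

/-- The ZFC set `x` codes the set of ordinals `b`. -/
def CodesSet (x : ZFSet) (b : Set Ordinal) : Prop :=
  ∀ y, y ∈ x ↔ ∃ α ∈ b, IsOrdZF y α

/-- `M ∩ λ`: the set of ordinals below `λ` whose von Neumann code lies in `M`. -/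
def ordsOf (lam : Cardinal) (M : Set ZFSet) : Set Ordinal :=
  {α | α < lam.ord ∧ ∃ x ∈ M, IsOrdZF x α}

/-- A slender `P_κ λ`-list: for every sufficiently large regular `θ` there is a club
`C ⊆ P_κ H_θ` such that `d_{M ∩ λ} ∩ b ∈ M` for all `M ∈ C` and all countable `b ∈ M`
with `b ⊆ λ`. -/
def IsSlender (κ lam : Cardinal) (d : Set Ordinal → Set Ordinal) : Prop :=
  ∃ θ₀ : Cardinal, ∀ θ, θ₀ ≤ θ → θ.IsRegular →
    ∃ C, IsClubIn κ {M : Set ZFSet.{0} | M ⊆ HSet θ ∧ #M < Cardinal.lift.{1} κ} C ∧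
      ∀ M ∈ C, ∀ b : Set Ordinal, b.Countable → (∀ α ∈ b, α < lam.ord) →
        (∃ x ∈ M, CodesSet x b) →
        ∃ x ∈ M, CodesSet x (d (ordsOf lam M) ∩ b)

/-- `e` is a cofinal branch of the list `d`. -/
def IsCofBranch (κ lam : Cardinal) (d : Set Ordinal → Set Ordinal) (e : Set Ordinal) : Prop :=
  (∀ α ∈ e, α < lam.ord) ∧
    ∀ a ∈ Pk κ lam, ∃ z ∈ Pk κ lam, a ⊆ z ∧ e ∩ a = d z ∩ a

/-- `e` is an ineffable branch of the list `d`. -/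
def IsIneffBranch (κ lam : Cardinal) (d : Set Ordinal → Set Ordinal) (e : Set Ordinal) : Prop :=
  (∀ α ∈ e, α < lam.ord) ∧
    IsStatIn κ (Pk κ lam) {a ∈ Pk κ lam | e ∩ a = d a}

/-- `TP(κ,λ)`: every thin `P_κ λ`-list has a cofinal branch. -/
def TP (κ lam : Cardinal) : Prop :=
  ∀ d, IsList κ lam d → IsThin κ lam d → ∃ e, IsCofBranch κ lam d e

/-- `SP(κ,λ)`: every slender `P_κ λ`-list has a cofinal branch. -/
def SP (κ lam : Cardinal) : Prop :=
  ∀ d, IsList κ lam d → IsSlender κ lam d → ∃ e, IsCofBranch κ lam d e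

/-- `ITP(κ,λ)`: every thin `P_κ λ`-list has an ineffable branch. -/
def ITP (κ lam : Cardinal) : Prop :=
  ∀ d, IsList κ lam d → IsThin κ lam d → ∃ e, IsIneffBranch κ lam d e

/-- `ISP(κ,λ)`: every slender `P_κ λ`-list has an ineffable branch. -/
def ISP (κ lam : Cardinal) : Prop :=
  ∀ d, IsList κ lam d → IsSlender κ lam d → ∃ e, IsIneffBranch κ lam d e

/-- The list `d` is `A`-effable. -/
def IsEffable (κ lam : Cardinal) (d : Set Ordinal → Set Ordinal) (A : Set (Set Ordinal)) : Prop :=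
  ∀ S, S ⊆ A → IsStatIn κ (Pk κ lam) S →
    ∃ a ∈ S, ∃ b ∈ S, a ⊆ b ∧ d a ≠ d b ∩ a

/-- The ideal `I_IT[κ,λ]`. -/
def IIT (κ lam : Cardinal) : Set (Set (Set Ordinal)) :=
  {A | A ⊆ Pk κ lam ∧ ∃ d, IsList κ lam d ∧ IsThin κ lam d ∧ IsEffable κ lam d A}

/-- The ideal `I_IS[κ,λ]`. -/
def IIS (κ lam : Cardinal) : Set (Set (Set Ordinal)) :=
  {A | A ⊆ Pk κ lam ∧ ∃ d, IsList κ lam d ∧ IsSlender κ lam d ∧ IsEffable κ lam d A}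

/-- The filter `F_IT[κ,λ]` dual to `I_IT[κ,λ]`. -/
def FIT (κ lam : Cardinal) : Set (Set (Set Ordinal)) :=
  {A | A ⊆ Pk κ lam ∧ (Pk κ lam \ A) ∈ IIT κ lam}

/-- `U` is an ultrafilter on the set `X`. -/
def IsUFOn {α : Type*} (X : Set α) (U : Set (Set α)) : Prop :=
  (∀ A ∈ U, A ⊆ X) ∧ X ∈ U ∧ ∅ ∉ U ∧
    (∀ A ∈ U, ∀ B, A ⊆ B → B ⊆ X → B ∈ U) ∧
    (∀ A ∈ U, ∀ B ∈ U, A ∩ B ∈ U) ∧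
    (∀ A, A ⊆ X → (A ∈ U ∨ X \ A ∈ U))

/-- `U` is `κ`-complete: closed under intersections of fewer than `κ` of its members. -/
def KComplete (κ : Cardinal.{0}) (X : Set (Set Ordinal)) (U : Set (Set (Set Ordinal))) : Prop :=
  ∀ s : Set (Set (Set Ordinal)), s ⊆ U → #s < Cardinal.lift.{1} κ → X ∩ ⋂₀ s ∈ U

/-- `U` is fine on `P_κ λ`. -/
def Fine (κ lam : Cardinal) (U : Set (Set (Set Ordinal))) : Prop :=
  ∀ x < lam.ord, {a ∈ Pk κ lam | x ∈ a} ∈ U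

/-- `U` is normal on `P_κ λ`: closed under diagonal intersections. -/
def NormalUF (κ lam : Cardinal) (U : Set (Set (Set Ordinal))) : Prop :=
  ∀ A : Ordinal → Set (Set Ordinal), (∀ x < lam.ord, A x ∈ U) →
    {a ∈ Pk κ lam | ∀ x ∈ a, a ∈ A x} ∈ U

/-- `κ` is strongly compact: for every `λ ≥ κ` there is a `κ`-complete fine
ultrafilter on `P_κ λ`. -/
def IsStronglyCompact (κ : Cardinal) : Prop :=
  ∀ lam : Cardinal, κ ≤ lam →
    ∃ U, IsUFOn (Pk κ lam) U ∧ KComplete κ (Pk κ lam) U ∧ Fine κ lam U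

/-- `κ` is supercompact: for every `λ ≥ κ` there is a `κ`-complete normal fine
ultrafilter on `P_κ λ`. -/
def IsSupercompact (κ : Cardinal) : Prop :=
  ∀ lam : Cardinal, κ ≤ lam →
    ∃ U, IsUFOn (Pk κ lam) U ∧ KComplete κ (Pk κ lam) U ∧ Fine κ lam U ∧ NormalUF κ lam U

/-- `C` is club in the ordinal `o`: unbounded in `o` and closed. -/
def OrdClub (o : Ordinal) (C : Set Ordinal) : Prop :=
  C ⊆ Set.Iio o ∧ (∀ β < o, ∃ γ ∈ C, β ≤ γ) ∧
    ∀ α < o, 0 < α → sSup (C ∩ Set.Iio α) = α → α ∈ C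

/-- `S` is stationary in the ordinal `o`. -/
def OrdStat (o : Ordinal) (S : Set Ordinal) : Prop :=
  S ⊆ Set.Iio o ∧ ∀ C, OrdClub o C → (S ∩ C).Nonempty

/-- `δ` is a limit point of `C`: `δ > 0` and `δ = sup (C ∩ δ)`. -/
def IsLimPt (C : Set Ordinal) (δ : Ordinal) : Prop :=
  0 < δ ∧ sSup (C ∩ Set.Iio δ) = δ

/-- `κ` is an ineffable cardinal. -/
def IsIneffableCard (κ : Cardinal) : Prop :=
  ∀ d : Ordinal → Set Ordinal, (∀ α < κ.ord, d α ⊆ Set.Iio α) →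
    ∃ e ⊆ Set.Iio κ.ord, OrdStat κ.ord {α | α < κ.ord ∧ e ∩ Set.Iio α = d α}

/-- A `□_E(κ,λ)`-sequence. -/
def IsSquareSeq (κ : Cardinal.{0}) (lam : Ordinal.{0}) (E : Set Ordinal.{0})
    (𝒞 : Ordinal.{0} → Set (Set Ordinal.{0})) : Prop :=
  (∀ α, Order.IsSuccLimit α → α ∈ E → α < lam →
    ((𝒞 α).Nonempty ∧ #(𝒞 α) < Cardinal.lift.{1} κ) ∧
      ∀ C ∈ 𝒞 α, OrdClub α C ∧ ∀ β, IsLimPt C β → β ∈ E → C ∩ Set.Iio β ∈ 𝒞 β) ∧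
  ¬∃ D, OrdClub lam D ∧ ∀ δ, IsLimPt D δ → δ ∈ E → δ < lam → D ∩ Set.Iio δ ∈ 𝒞 δ

/-- `□_E(κ,λ)` holds. -/
def SquareE (κ : Cardinal.{0}) (lam : Ordinal.{0}) (E : Set Ordinal.{0}) : Prop :=
  ∃ 𝒞, IsSquareSeq κ lam E 𝒞

/-- `(a, ∈) ≺ (λ, ∈)`: `a` is an elementary substructure of the ordinals below `lam`
(with `∈`, equivalently the order, as the only relation). -/
def ElemSubOrd (lam : Ordinal) (a : Set Ordinal) : Prop :=
  letI := FirstOrder.Language.orderStructure ↥a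
  letI := FirstOrder.Language.orderStructure ↥(Set.Iio lam)
  ∃ h : a ⊆ Set.Iio lam,
    ∀ (n : ℕ) (φ : FirstOrder.Language.order.Formula (Fin n)) (v : Fin n → ↥a),
      φ.Realize v ↔ φ.Realize fun i => Set.inclusion h (v i)

/-- `P'_κ λ`: the members `a` of `P_κ λ` with `a ∩ κ` an ordinal and `(a,∈) ≺ (λ,∈)`. -/
def P'k (κ lam : Cardinal) : Set (Set Ordinal) :=
  {a ∈ Pk κ lam | (∃ β : Ordinal, a ∩ Set.Iio κ.ord = Set.Iio β) ∧ ElemSubOrd lam.ord a}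

/-- `κ_a`: the ordinal `a ∩ κ` (for `a ∈ P'_κ λ`). -/
noncomputable def kapOf (κ : Cardinal) (a : Set Ordinal) : Ordinal :=
  sInf {β : Ordinal | a ∩ Set.Iio κ.ord ⊆ Set.Iio β}

def SK {X : Type 1} (κ : Cardinal.{0}) (Y : Set X) : Set (Set X) :=
  {a | a ⊆ Y ∧ #a < Cardinal.lift.{1} κ}

theorem Pk_eq_SK (κ lam : Cardinal.{0}) : Pk κ lam = SK κ (Set.Iio lam.ord) := rfl

theorem lift_isRegular {κ : Cardinal.{0}} (h : κ.IsRegular) :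
    (Cardinal.lift.{1} κ).IsRegular :=
  ⟨aleph0_le_lift.2 h.1, by
    rw [← Cardinal.lift_ord, ← Ordinal.lift_cof]
    exact Cardinal.lift_le.2 h.2⟩

theorem card_iUnion_lt {X : Type 1} {ι : Type 1} {κ : Cardinal.{0}} (hreg : κ.IsRegular)
    (f : ι → Set X) (hι : #ι < Cardinal.lift.{1} κ)
    (hf : ∀ i, #(f i) < Cardinal.lift.{1} κ) : #(⋃ i, f i) < Cardinal.lift.{1} κ :=
  (Cardinal.card_iUnion_lt_iff_forall_of_isRegular (lift_isRegular hreg) hι).2 hf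

theorem mem_Iio_card {δ : Ordinal.{0}} {κ : Cardinal.{0}} (h : δ.card < κ) :
    #(Set.Iio δ) < Cardinal.lift.{1} κ := by
  rw [Ordinal.mk_Iio_ordinal]; exact Cardinal.lift_lt.2 h

/-- `SK κ Y` is a club in itself. -/
theorem SK_club {X : Type 1} {κ : Cardinal.{0}} (hreg : κ.IsRegular) (Y : Set X) :
    IsClubIn κ (SK κ Y) (SK κ Y) := by
  refine ⟨le_refl _, fun a ha => ⟨a, ha, subset_rfl⟩, fun δ h0 hδ f hf hmono => ?_⟩
  constructor
  · exact iUnion₂_subset fun β hβ => (hf β hβ).1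
  · have : (⋃ β ∈ Set.Iio δ, f β) = ⋃ i : (Set.Iio δ : Set Ordinal), f i := by
      simp [Set.biUnion_eq_iUnion]
    rw [this]
    exact card_iUnion_lt hreg _ (mem_Iio_card hδ) fun i => (hf i i.2).2

/-- the point club `{a ∈ SK | x ∈ a}`. -/
theorem point_club {X : Type 1} {κ : Cardinal.{0}} (hreg : κ.IsRegular) (hunc : ℵ₀ < κ)
    {Y : Set X} {x : X} (hx : x ∈ Y) :
    IsClubIn κ (SK κ Y) {a ∈ SK κ Y | x ∈ a} := by
  refine ⟨fun a ha => ha.1, fun a ha => ?_, fun δ h0 hδ f hf hmono => ?_⟩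
  · refine ⟨insert x a, ⟨⟨insert_subset hx ha.1, ?_⟩, mem_insert _ _⟩, subset_insert _ _⟩
    exact lt_of_le_of_lt Cardinal.mk_insert_le
      (Cardinal.add_lt_of_lt (aleph0_le_lift.2 hreg.1) ha.2
        (lt_of_lt_of_le Cardinal.one_lt_aleph0 (aleph0_le_lift.2 hreg.1)))
  · constructor
    · exact (SK_club hreg Y).2.2 δ h0 hδ f (fun β hβ => (hf β hβ).1) hmono
    · exact Set.mem_biUnion h0 (hf 0 h0).2

/-- union of an increasing ω-sequence of club members is in the club. -/
theorem omega_chain_mem {X : Type 1} {κ : Cardinal.{0}} (hunc : ℵ₀ < κ)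
    {S C : Set (Set X)} (hC : IsClubIn κ S C) (seq : ℕ → Set X)
    (hmono : Monotone seq) (hmem : ∀ n, seq n ∈ C) : (⋃ n, seq n) ∈ C := by
  have hfn : ∀ n : ℕ, (⋃ m : ℕ, ⋃ (_ : (m : Ordinal) ≤ (n : Ordinal)), seq m) = seq n := by
    intro n
    apply subset_antisymm
    · exact iUnion₂_subset fun m hm => hmono (Nat.cast_le.1 hm)
    · intro x hx
      exact Set.mem_iUnion.2 ⟨n, Set.mem_iUnion.2 ⟨le_rfl, hx⟩⟩
  have key := hC.2.2 Ordinal.omega0 Ordinal.omega0_pos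
    (by rw [Ordinal.card_omega0]; exact hunc)
    (fun β => ⋃ m : ℕ, ⋃ (_ : (m : Ordinal) ≤ β), seq m)
    (fun β hβ => by
      obtain ⟨n, rfl⟩ := Ordinal.lt_omega0.1 hβ
      show (⋃ m : ℕ, ⋃ (_ : (m : Ordinal) ≤ (n : Ordinal)), seq m) ∈ C
      rw [hfn]; exact hmem n)
    (fun β γ hβγ _ =>
      iUnion₂_subset fun n hn => fun x hx =>
        Set.mem_iUnion.2 ⟨n, Set.mem_iUnion.2 ⟨hn.trans hβγ, hx⟩⟩)
  have heq : (⋃ β ∈ Set.Iio Ordinal.omega0, ⋃ m : ℕ, ⋃ (_ : (m : Ordinal) ≤ β), seq m)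
      = ⋃ n, seq n := by
    apply subset_antisymm
    · exact iUnion₂_subset fun β _ => iUnion₂_subset fun n _ => subset_iUnion _ n
    · intro x hx
      obtain ⟨n, hn⟩ := Set.mem_iUnion.1 hx
      refine Set.mem_biUnion (Ordinal.nat_lt_omega0 n) ?_
      rw [hfn]; exact hn
  rwa [heq] at key

open Classical in
noncomputable def pickAbove {X : Type 1} {κ : Cardinal.{0}} {S : Set (Set X)}
    (C : Set (Set X)) (hC : IsClubIn κ S C) : Set X → Set X := fun a =>
  if h : a ∈ S then Classical.choose (hC.2.1 a h) else ∅

theorem pickAbove_spec {X : Type 1} {κ : Cardinal.{0}} {S : Set (Set X)}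
    (C : Set (Set X)) (hC : IsClubIn κ S C) {a : Set X} (ha : a ∈ S) :
    pickAbove C hC a ∈ C ∧ a ⊆ pickAbove C hC a := by
  rw [pickAbove, dif_pos ha]
  obtain ⟨h1, h2⟩ := Classical.choose_spec (hC.2.1 a ha)
  exact ⟨h1, h2⟩

/-- intersection of two clubs is a club. -/
theorem inter_club {X : Type 1} {κ : Cardinal.{0}} (hunc : ℵ₀ < κ)
    {S C D : Set (Set X)} (hC : IsClubIn κ S C) (hD : IsClubIn κ S D) :
    IsClubIn κ S (C ∩ D) := by
  refine ⟨fun a ha => hC.1 ha.1, fun a ha => ?_, fun δ h0 hδ f hf hmono => ?_⟩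
  · -- interleave
    set seq : ℕ → Set X :=
      fun n => Nat.rec (pickAbove C hC a)
        (fun _ prev => pickAbove C hC (pickAbove D hD prev)) n with hseq
    have hsucc : ∀ n, seq (n + 1) = pickAbove C hC (pickAbove D hD (seq n)) := fun n => rfl
    have hbase : pickAbove C hC a ∈ C ∧ a ⊆ pickAbove C hC a := pickAbove_spec C hC ha
    have hind : ∀ n, seq n ∈ C ∧ pickAbove D hD (seq n) ∈ D ∧
        seq n ⊆ pickAbove D hD (seq n) ∧ pickAbove D hD (seq n) ⊆ seq (n+1) := by
      intro n
      induction n with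
      | zero =>
        have h1 : seq 0 ∈ C := hbase.1
        have h2 := pickAbove_spec D hD (hC.1 h1)
        have h3 := pickAbove_spec C hC (hD.1 h2.1)
        exact ⟨h1, h2.1, h2.2, by rw [hsucc]; exact h3.2⟩
      | succ n ih =>
        have hc : seq (n+1) ∈ C := by
          rw [hsucc]; exact (pickAbove_spec C hC (hD.1 ih.2.1)).1
        have h2 := pickAbove_spec D hD (hC.1 hc)
        have h3 := pickAbove_spec C hC (hD.1 h2.1)
        exact ⟨hc, h2.1, h2.2, by rw [hsucc]; exact h3.2⟩
    have hseqmono : Monotone seq :=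
      monotone_nat_of_le_succ fun n =>
        Set.Subset.trans (hind n).2.2.1 (hind n).2.2.2
    have hstepmono : Monotone fun n => pickAbove D hD (seq n) :=
      monotone_nat_of_le_succ fun n =>
        Set.Subset.trans (hind n).2.2.2 (hind (n+1)).2.2.1
    have hEq : (⋃ n, seq n) = ⋃ n, pickAbove D hD (seq n) := by
      apply subset_antisymm
      · exact iUnion_subset fun n =>
          Set.Subset.trans (hind n).2.2.1 (subset_iUnion (fun n => pickAbove D hD (seq n)) n)
      · exact iUnion_subset fun n =>
          Set.Subset.trans (hind n).2.2.2 (subset_iUnion seq (n+1))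
    refine ⟨⋃ n, seq n, ⟨?_, ?_⟩, hbase.2.trans (subset_iUnion seq 0)⟩
    · exact omega_chain_mem hunc hC seq hseqmono fun n => (hind n).1
    · rw [hEq]
      exact omega_chain_mem hunc hD _ hstepmono fun n => (hind n).2.1
  · exact ⟨hC.2.2 δ h0 hδ f (fun β hβ => (hf β hβ).1) hmono,
      hD.2.2 δ h0 hδ f (fun β hβ => (hf β hβ).2) hmono⟩

/-- diagonal intersection of clubs indexed through a "trace" function `e` is a club. -/
theorem diag_club {X : Type 1} {κ : Cardinal.{0}} (hreg : κ.IsRegular) (hunc : ℵ₀ < κ)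
    (Y : Set X) (C : Ordinal.{0} → Set (Set X)) (hC : ∀ γ, IsClubIn κ (SK κ Y) (C γ))
    (e : Set X → Set Ordinal.{0})
    (hemono : ∀ a b : Set X, a ⊆ b → e a ⊆ e b)
    (hecont : ∀ s : Set (Set X), e (⋃₀ s) ⊆ ⋃ a ∈ s, e a)
    (hecard : ∀ a ∈ SK κ Y, #(e a) < Cardinal.lift.{1} κ) :
    IsClubIn κ (SK κ Y) {a ∈ SK κ Y | ∀ γ ∈ e a, a ∈ C γ} := by
  have hlift : ℵ₀ < Cardinal.lift.{1} κ := by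
    rw [← Cardinal.lift_aleph0.{1,0}]; exact Cardinal.lift_lt.2 hunc
  refine ⟨fun a ha => ha.1, fun a ha => ?_, fun δ h0 hδ f hf hmono => ?_⟩
  · -- cofinality via ω-iteration
    obtain ⟨step, hstep⟩ : ∃ step : Set X → Set X, ∀ t, t ∈ SK κ Y →
        (step t ∈ SK κ Y ∧ t ⊆ step t) ∧
        ∀ γ ∈ e t, ∃ c, c ∈ C γ ∧ t ⊆ c ∧ c ⊆ step t := by
      refine ⟨fun t => t ∪ ⋃ γ ∈ e t, pickAbove (C γ) (hC γ) t, fun t ht => ?_⟩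
      have hpieces : ∀ γ : Ordinal, γ ∈ e t → pickAbove (C γ) (hC γ) t ∈ SK κ Y :=
        fun γ _ => (hC γ).1 (pickAbove_spec (C γ) (hC γ) ht).1
      have hU : (⋃ γ ∈ e t, pickAbove (C γ) (hC γ) t) ∈ SK κ Y := by
        constructor
        · exact iUnion₂_subset fun γ hγ => (hpieces γ hγ).1
        · rw [Set.biUnion_eq_iUnion]
          exact card_iUnion_lt hreg _ (hecard t ht) fun i => (hpieces i.1 i.2).2
      refine ⟨⟨⟨union_subset ht.1 hU.1, ?_⟩, subset_union_left⟩, ?_⟩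
      · exact lt_of_le_of_lt (Cardinal.mk_union_le _ _)
          (Cardinal.add_lt_of_lt (le_of_lt hlift) ht.2 hU.2)
      · intro γ hγ
        refine ⟨pickAbove (C γ) (hC γ) t, (pickAbove_spec (C γ) (hC γ) ht).1,
          (pickAbove_spec (C γ) (hC γ) ht).2, ?_⟩
        show pickAbove (C γ) (hC γ) t ⊆ t ∪ ⋃ γ ∈ e t, pickAbove (C γ) (hC γ) t
        exact Set.subset_union_of_subset_right
          (Set.subset_biUnion_of_mem (u := fun γ => pickAbove (C γ) (hC γ) t) hγ) t
    obtain ⟨seq, hseq0, hsucc⟩ : ∃ seq : ℕ → Set X, seq 0 = a ∧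
        ∀ n, seq (n + 1) = step (seq n) :=
      ⟨fun n => Nat.rec a (fun _ p => step p) n, rfl, fun _ => rfl⟩
    have hSK : ∀ n, seq n ∈ SK κ Y := by
      intro n; induction n with
      | zero => rw [hseq0]; exact ha
      | succ n ih => rw [hsucc]; exact ((hstep _ ih).1).1
    have hseqmono : Monotone seq :=
      monotone_nat_of_le_succ fun n => by rw [hsucc]; exact ((hstep _ (hSK n)).1).2
    have huSK : (⋃ n, seq n) ∈ SK κ Y := by
      constructor
      · exact iUnion_subset fun n => (hSK n).1
      · have h2 : (⋃ n, seq n) = ⋃ i : ULift.{1} ℕ, seq i.down := by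
          apply subset_antisymm
          · exact iUnion_subset fun n => subset_iUnion (fun i : ULift.{1} ℕ => seq i.down) ⟨n⟩
          · exact iUnion_subset fun i => subset_iUnion seq i.down
        rw [h2]
        exact card_iUnion_lt hreg (fun i : ULift.{1} ℕ => seq i.down)
          (by rw [Cardinal.mk_uLift, Cardinal.mk_nat, Cardinal.lift_aleph0]; exact hlift)
          (fun i => (hSK i.down).2)
    refine ⟨⋃ n, seq n, ⟨huSK, ?_⟩, hseq0 ▸ subset_iUnion seq 0⟩
    intro γ hγ
    have hγ' : γ ∈ ⋃ t ∈ Set.range seq, e t := by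
      apply hecont
      rwa [Set.sUnion_range]
    rw [Set.mem_iUnion₂] at hγ'
    obtain ⟨t, ⟨N, rfl⟩, hγN⟩ := hγ'
    have hγn : ∀ n, γ ∈ e (seq (N + n)) :=
      fun n => hemono _ _ (hseqmono (Nat.le_add_right N n)) hγN
    obtain ⟨cseq, hcseq⟩ : ∃ cseq : ℕ → Set X, ∀ n,
        cseq n ∈ C γ ∧ seq (N + n) ⊆ cseq n ∧ cseq n ⊆ seq (N + n + 1) := by
      have h3 : ∀ n, ∃ c, c ∈ C γ ∧ seq (N + n) ⊆ c ∧ c ⊆ seq (N + n + 1) := by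
        intro n
        obtain ⟨c, hc1, hc2, hc3⟩ := (hstep _ (hSK (N + n))).2 γ (hγn n)
        exact ⟨c, hc1, hc2, by rw [hsucc]; exact hc3⟩
      exact ⟨fun n => (h3 n).choose, fun n => (h3 n).choose_spec⟩
    have hcmono : Monotone cseq :=
      monotone_nat_of_le_succ fun n =>
        (((hcseq n).2.2).trans (hseqmono (by omega : N + n + 1 ≤ N + (n+1)))).trans
          (hcseq (n+1)).2.1
    have hceq : (⋃ n, cseq n) = ⋃ n, seq n := by
      apply subset_antisymm
      · exact iUnion_subset fun n => ((hcseq n).2.2).trans (subset_iUnion seq (N + n + 1))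
      · exact iUnion_subset fun n =>
          (hseqmono (Nat.le_add_left n N)).trans (((hcseq n).2.1).trans (subset_iUnion cseq n))
    rw [← hceq]
    exact omega_chain_mem hunc (hC γ) cseq hcmono fun n => (hcseq n).1
  · -- closure
    have huSK : (⋃ β ∈ Set.Iio δ, f β) ∈ SK κ Y :=
      (SK_club hreg Y).2.2 δ h0 hδ f (fun β hβ => (hf β hβ).1) hmono
    refine ⟨huSK, ?_⟩
    intro γ hγ
    have hγ' : γ ∈ ⋃ t ∈ f '' Set.Iio δ, e t := by
      apply hecont
      rwa [Set.sUnion_image]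
    rw [Set.mem_iUnion₂] at hγ'
    obtain ⟨t, ht, hγ₀⟩ := hγ'
    obtain ⟨β₀, hβ₀, rfl⟩ := ht
    have key := (hC γ).2.2 δ h0 hδ (fun β => f (max β β₀))
      (fun β hβ => (hf (max β β₀) (max_lt hβ hβ₀)).2 γ
        (hemono _ _ (hmono β₀ (max β β₀) (le_max_right _ _) (max_lt hβ hβ₀)) hγ₀))
      (fun β β' hββ' hβ' => hmono _ _ (max_le_max hββ' le_rfl) (max_lt hβ' hβ₀))
    have heq : (⋃ β ∈ Set.Iio δ, f (max β β₀)) = ⋃ β ∈ Set.Iio δ, f β := by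
      apply subset_antisymm
      · exact iUnion₂_subset fun β hβ =>
          Set.subset_biUnion_of_mem (Set.mem_Iio.2 (max_lt hβ hβ₀))
      · exact iUnion₂_subset fun β hβ =>
          (hmono β (max β β₀) (le_max_left _ _) (max_lt hβ hβ₀)).trans
            (Set.subset_biUnion_of_mem (u := fun β => f (max β β₀)) hβ)
    rwa [heq] at key

/-! ### Stationarity helpers -/

theorem not_stat {X : Type 1} {κ : Cardinal.{0}} {S T : Set (Set X)} (hsub : T ⊆ S)
    (h : ¬ IsStatIn κ S T) : ∃ C, IsClubIn κ S C ∧ T ∩ C = ∅ := by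
  rw [IsStatIn, not_and] at h
  have h2 := h hsub
  push_neg at h2
  obtain ⟨C, hC, hne⟩ := h2
  exact ⟨C, hC, hne⟩

theorem stat_split {X : Type 1} {κ : Cardinal.{0}} (hunc : ℵ₀ < κ) {S T : Set (Set X)}
    (hT : IsStatIn κ S T) (A : Set (Set X)) :
    IsStatIn κ S (T ∩ A) ∨ IsStatIn κ S (T \ A) := by
  by_contra h
  push_neg at h
  obtain ⟨C₁, hC₁, hd₁⟩ := not_stat (fun a ha => hT.1 ha.1) h.1
  obtain ⟨C₂, hC₂, hd₂⟩ := not_stat (fun a ha => hT.1 ha.1) h.2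
  obtain ⟨a, haT, haC⟩ := hT.2 (C₁ ∩ C₂) (inter_club hunc hC₁ hC₂)
  by_cases hA : a ∈ A
  · exact Set.eq_empty_iff_forall_notMem.1 hd₁ a ⟨⟨haT, hA⟩, haC.1⟩
  · exact Set.eq_empty_iff_forall_notMem.1 hd₂ a ⟨⟨haT, hA⟩, haC.2⟩

/-! ### `ordsOf` and `HSet` helpers -/

theorem ordsOf_mono (lam : Cardinal.{0}) {M N : Set ZFSet.{0}} (h : M ⊆ N) :
    ordsOf lam M ⊆ ordsOf lam N := by
  rintro α ⟨h1, x, hx, h2⟩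
  exact ⟨h1, x, h hx, h2⟩

theorem ordsOf_sUnion (lam : Cardinal.{0}) (s : Set (Set ZFSet.{0})) :
    ordsOf lam (⋃₀ s) ⊆ ⋃ M ∈ s, ordsOf lam M := by
  rintro α ⟨h1, x, hx, h2⟩
  obtain ⟨M, hM, hxM⟩ := hx
  exact Set.mem_biUnion hM ⟨h1, x, hxM, h2⟩

theorem ordsOf_card_le (lam : Cardinal.{0}) (M : Set ZFSet.{0}) :
    #(ordsOf lam M) ≤ #M := by
  have hex : ∀ α : ordsOf lam M, ∃ x, x ∈ M ∧ IsOrdZF x α.1 := fun α => by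
    obtain ⟨_, x, hx, h2⟩ := α.2
    exact ⟨x, hx, h2⟩
  choose f hf1 hf2 using hex
  apply Cardinal.mk_le_of_injective (f := fun α => (⟨f α, hf1 α⟩ : M))
  intro α β hαβ
  have hfe : f α = f β := congrArg Subtype.val hαβ
  have h1 : (α : Ordinal) = β := by rw [← (hf2 α).2, hfe, (hf2 β).2]
  exact Subtype.ext h1

theorem empty_mem_HSet {θ : Cardinal.{0}} (hθ : ℵ₀ ≤ θ) : (∅ : ZFSet) ∈ HSet θ := by
  rw [HSet, Set.mem_setOf_eq, ZFSet.hereditarily_iff]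
  refine ⟨?_, fun y hy => absurd hy (ZFSet.notMem_empty y)⟩
  rw [show (∅ : ZFSet).toSet = ∅ from Set.ext fun y => iff_of_false (ZFSet.notMem_empty y) (Set.notMem_empty y), Cardinal.mk_emptyCollection]
  exact lt_of_lt_of_le aleph0_pos (aleph0_le_lift.2 hθ)

theorem codes_empty : CodesSet ∅ ∅ := by
  intro y
  constructor
  · exact fun h => absurd h (ZFSet.notMem_empty y)
  · rintro ⟨α, hα, -⟩
    exact absurd hα (Set.notMem_empty α)

theorem exists_theta_bound (lam : Cardinal.{0}) (θf : Ordinal.{0} → Cardinal.{0}) :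
    ∃ θ₀ : Cardinal.{0}, ℵ₀ ≤ θ₀ ∧ ∀ γ < lam.ord, θf γ ≤ θ₀ := by
  obtain ⟨c, hc⟩ := Cardinal.bddAbove_of_small
    (s := Set.range fun i : (Set.Iio lam.ord : Set Ordinal.{0}) => θf i.1)
  exact ⟨max c ℵ₀, le_max_right _ _,
    fun γ hγ => le_trans (hc ⟨⟨γ, hγ⟩, rfl⟩) (le_max_left _ _)⟩

theorem IIS_normal_ideal (κ lam : Cardinal.{0})
    (hreg : κ.IsRegular) (hunc : ℵ₀ < κ) (hle : κ ≤ lam) :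
    (∀ A, A ⊆ Pk κ lam → ¬ IsStatIn κ (Pk κ lam) A → A ∈ IIS κ lam) ∧
    (∀ A ∈ IIS κ lam, ∀ B, B ⊆ A → B ∈ IIS κ lam) ∧
    (∀ A ∈ IIS κ lam, ∀ B ∈ IIS κ lam, A ∪ B ∈ IIS κ lam) ∧
    (∀ D, D ⊆ Pk κ lam → ∀ g : Set Ordinal → Ordinal,
      (∀ a ∈ D, a.Nonempty → g a ∈ a) →
      (∀ γ < lam.ord, {a ∈ D | g a = γ} ∈ IIS κ lam) →
      D ∈ IIS κ lam) := by
  classical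
  have hlampos : (0 : Ordinal) < lam.ord := by
    rw [← Cardinal.ord_zero]
    exact Cardinal.ord_lt_ord.2 (lt_of_lt_of_le (lt_of_le_of_lt aleph0_pos.le hunc) hle)
  refine ⟨?_, ?_, ?_, ?_⟩
  · -- nonstationary sets
    intro A hA hns
    refine ⟨hA, fun _ => ∅, fun a _ => Set.empty_subset a, ?_, ?_⟩
    · refine ⟨ℵ₀, fun θ hθ hθreg => ?_⟩
      refine ⟨{M ∈ SK κ (HSet θ) | (∅ : ZFSet) ∈ M},
        point_club hreg hunc (empty_mem_HSet hθreg.1), ?_⟩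
      intro M hM b hb hbsub hcode
      refine ⟨∅, hM.2, ?_⟩
      show CodesSet ∅ ((∅ : Set Ordinal) ∩ b)
      rw [Set.empty_inter]
      exact codes_empty
    · intro S hSA hstat
      obtain ⟨C, hC, hdisj⟩ := not_stat hA hns
      obtain ⟨a, haS, haC⟩ := hstat.2 C hC
      have haAC : a ∈ A ∩ C := ⟨hSA haS, haC⟩
      rw [hdisj] at haAC
      exact absurd haAC (Set.notMem_empty a)
  · -- subsets
    rintro A ⟨hA, d, hl, hs, he⟩ B hBA
    exact ⟨hBA.trans hA, d, hl, hs, fun S hS hstat => he S (hS.trans hBA) hstat⟩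
  · -- finite unions
    rintro A ⟨hA, d₁, hl₁, hs₁, he₁⟩ B ⟨hB, d₂, hl₂, hs₂, he₂⟩
    obtain ⟨d, hd⟩ : ∃ d : Set Ordinal → Set Ordinal,
        ∀ a, d a = if a ∈ A then d₁ a else d₂ a := ⟨_, fun _ => rfl⟩
    refine ⟨Set.union_subset hA hB, d, ?_, ?_, ?_⟩
    · intro a ha
      rw [hd a]
      by_cases h : a ∈ A
      · rw [if_pos h]; exact hl₁ a ha
      · rw [if_neg h]; exact hl₂ a ha
    · obtain ⟨θ₁, hθ₁⟩ := hs₁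
      obtain ⟨θ₂, hθ₂⟩ := hs₂
      refine ⟨max θ₁ θ₂, fun θ hθ hθreg => ?_⟩
      obtain ⟨C₁, hC₁, hP₁⟩ := hθ₁ θ (le_trans (le_max_left _ _) hθ) hθreg
      obtain ⟨C₂, hC₂, hP₂⟩ := hθ₂ θ (le_trans (le_max_right _ _) hθ) hθreg
      refine ⟨C₁ ∩ C₂, inter_club hunc hC₁ hC₂, ?_⟩
      intro M hM b hb hbsub hcode
      rw [hd (ordsOf lam M)]
      by_cases h : ordsOf lam M ∈ A
      · rw [if_pos h]; exact hP₁ M hM.1 b hb hbsub hcode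
      · rw [if_neg h]; exact hP₂ M hM.2 b hb hbsub hcode
    · intro S hS hstat
      rcases stat_split hunc hstat A with hst | hst
      · obtain ⟨a, ha, b, hb, hab, hne⟩ := he₁ (S ∩ A) (Set.inter_subset_right) hst
        refine ⟨a, ha.1, b, hb.1, hab, ?_⟩
        rw [hd a, hd b, if_pos ha.2, if_pos hb.2]
        exact hne
      · have hsub : S \ A ⊆ B := fun a ha => (hS ha.1).resolve_left ha.2
        obtain ⟨a, ha, b, hb, hab, hne⟩ := he₂ (S \ A) hsub hst
        refine ⟨a, ha.1, b, hb.1, hab, ?_⟩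
        rw [hd a, hd b, if_neg ha.2, if_neg hb.2]
        exact hne
  · -- normality
    intro D hD g hg hfib
    have hfib' : ∀ γ : Ordinal, γ < lam.ord → ∃ d, IsList κ lam d ∧ IsSlender κ lam d ∧
        IsEffable κ lam d {a ∈ D | g a = γ} := fun γ hγ => (hfib γ hγ).2
    have hfib2 : ∀ γ : Ordinal, ∃ d : Set Ordinal → Set Ordinal, γ < lam.ord →
        IsList κ lam d ∧ IsSlender κ lam d ∧ IsEffable κ lam d {a ∈ D | g a = γ} := by
      intro γ
      by_cases h : γ < lam.ord
      · exact ⟨(hfib' γ h).choose, fun _ => (hfib' γ h).choose_spec⟩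
      · exact ⟨fun _ => ∅, fun hcon => absurd hcon h⟩
    choose dd hdd using hfib2
    obtain ⟨d, hd⟩ : ∃ d : Set Ordinal → Set Ordinal,
        ∀ a, d a = if a ∈ D ∧ a.Nonempty then dd (g a) a else ∅ := ⟨_, fun _ => rfl⟩
    refine ⟨hD, d, ?_, ?_, ?_⟩
    · -- list
      intro a ha
      rw [hd a]
      by_cases h : a ∈ D ∧ a.Nonempty
      · rw [if_pos h]
        exact (hdd (g a) (ha.1 (g a) (hg a h.1 h.2))).1 a ha
      · rw [if_neg h]; exact Set.empty_subset a
    · -- slender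
      have hsl : ∀ γ : Ordinal, ∃ θg : Cardinal.{0}, γ < lam.ord → ∀ θ, θg ≤ θ → θ.IsRegular →
          ∃ C, IsClubIn κ (SK κ (HSet θ)) C ∧
            ∀ M ∈ C, ∀ b : Set Ordinal, b.Countable → (∀ α ∈ b, α < lam.ord) →
              (∃ x ∈ M, CodesSet x b) →
              ∃ x ∈ M, CodesSet x (dd γ (ordsOf lam M) ∩ b) := by
        intro γ
        by_cases h : γ < lam.ord
        · obtain ⟨θg, hθg⟩ := (hdd γ h).2.1
          exact ⟨θg, fun _ => hθg⟩
        · exact ⟨ℵ₀, fun hcon => absurd hcon h⟩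
      choose θf hθf using hsl
      obtain ⟨θ₀, hθ₀0, hθ₀⟩ := exists_theta_bound lam θf
      refine ⟨θ₀, fun θ hθ hθreg => ?_⟩
      have hclub : ∀ γ : Ordinal, ∃ Cg, IsClubIn κ (SK κ (HSet θ)) Cg ∧
          (γ < lam.ord → ∀ M ∈ Cg, ∀ b : Set Ordinal, b.Countable →
            (∀ α ∈ b, α < lam.ord) → (∃ x ∈ M, CodesSet x b) →
            ∃ x ∈ M, CodesSet x (dd γ (ordsOf lam M) ∩ b)) := by
        intro γ
        by_cases h : γ < lam.ord
        · obtain ⟨C, hC1, hC2⟩ := hθf γ h θ (le_trans (hθ₀ γ h) hθ) hθreg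
          exact ⟨C, hC1, fun _ => hC2⟩
        · exact ⟨SK κ (HSet θ), SK_club hreg _, fun hcon => absurd hcon h⟩
      choose Cf hCf1 hCf2 using hclub
      have hΔ := diag_club hreg hunc (HSet θ) Cf hCf1 (ordsOf lam)
        (fun a b hab => ordsOf_mono lam hab) (ordsOf_sUnion lam)
        (fun a ha => lt_of_le_of_lt (ordsOf_card_le lam a) ha.2)
      refine ⟨{a ∈ SK κ (HSet θ) | ∀ γ ∈ ordsOf lam a, a ∈ Cf γ}
          ∩ {M ∈ SK κ (HSet θ) | (∅ : ZFSet) ∈ M},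
        inter_club hunc hΔ (point_club hreg hunc (empty_mem_HSet hθreg.1)), ?_⟩
      intro M hM b hb hbsub hcode
      rw [hd (ordsOf lam M)]
      by_cases h : ordsOf lam M ∈ D ∧ (ordsOf lam M).Nonempty
      · rw [if_pos h]
        have hγa : g (ordsOf lam M) ∈ ordsOf lam M := hg _ h.1 h.2
        exact hCf2 (g (ordsOf lam M)) hγa.1 M (hM.1.2 _ hγa) b hb hbsub hcode
      · rw [if_neg h]
        refine ⟨∅, hM.2.2, ?_⟩
        show CodesSet ∅ ((∅ : Set Ordinal) ∩ b)
        rw [Set.empty_inter]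
        exact codes_empty
    · -- effable
      intro S hSD hstat
      by_cases hcase : ∃ γ, IsStatIn κ (Pk κ lam) {a | a ∈ S ∧ a.Nonempty ∧ g a = γ}
      · obtain ⟨γ, hstatγ⟩ := hcase
        have hPkclub : IsClubIn κ (Pk κ lam) (Pk κ lam) := SK_club hreg (Set.Iio lam.ord)
        obtain ⟨a₀, ha₀, -⟩ := hstatγ.2 (Pk κ lam) hPkclub
        have hγ : γ < lam.ord := by
          have hh := hg a₀ (hSD ha₀.1) ha₀.2.1
          rw [ha₀.2.2] at hh
          exact (hstat.1 ha₀.1).1 γ hh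
        have hTsub : {a | a ∈ S ∧ a.Nonempty ∧ g a = γ} ⊆ {a ∈ D | g a = γ} :=
          fun a ha => ⟨hSD ha.1, ha.2.2⟩
        obtain ⟨a, ha, b, hb, hab, hne⟩ := (hdd γ hγ).2.2 _ hTsub hstatγ
        refine ⟨a, ha.1, b, hb.1, hab, ?_⟩
        rw [hd a, hd b, if_pos ⟨hSD ha.1, ha.2.1⟩, if_pos ⟨hSD hb.1, hb.2.1⟩,
          ha.2.2, hb.2.2]
        exact hne
      · push_neg at hcase
        exfalso
        have hE : ∀ γ : Ordinal, ∃ E, IsClubIn κ (Pk κ lam) E ∧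
            {a | a ∈ S ∧ a.Nonempty ∧ g a = γ} ∩ E = ∅ :=
          fun γ => not_stat (fun a ha => hstat.1 ha.1) (hcase γ)
        choose E hE1 hE2 using hE
        have hΔ := diag_club hreg hunc (Set.Iio lam.ord) E hE1 (fun a => a)
          (fun a b hab => hab)
          (fun s => by rw [Set.sUnion_eq_biUnion])
          (fun a ha => ha.2)
        have h0club : IsClubIn κ (SK κ (Set.Iio lam.ord))
            {a ∈ SK κ (Set.Iio lam.ord) | (0 : Ordinal) ∈ a} :=
          point_club hreg hunc (Set.mem_Iio.2 hlampos)
        obtain ⟨a, haS, haΔ, ha0⟩ := hstat.2 _ (inter_club hunc hΔ h0club)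
        have hane : a.Nonempty := ⟨0, ha0.2⟩
        have hmem : a ∈ {b | b ∈ S ∧ b.Nonempty ∧ g b = g a} := ⟨haS, hane, rfl⟩
        have hEa : a ∈ E (g a) := haΔ.2 (g a) (hg a (hSD haS) hane)
        exact Set.eq_empty_iff_forall_notMem.1 (hE2 (g a)) a ⟨hmem, hEa⟩
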